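/- arXiv:1309.7584 — 4 statements merged into one kernel-verified Lean document; each statement's English description precedes it below -/
import Mathlib

section
/- Let G be a context-free grammar. The grammar admits a left-recursive derivation A ⇒+ Aβ for some nonterminal A if and only if the directed graph whose nodes are the nonterminals and which has an edge from A to B whenever there is a rule A → A₁…AₖBγ with all A₁,…,Aₖ nullable (k ≥ 0) contains a cycle. -/
/-- One derivation step of a context-free grammar given by a rule predicate `P`. -/
inductive CFStep {T N : Type} (P : N → List (T ⊕ N) → Prop) :
    List (T ⊕ N) → List (T ⊕ N) → Prop
  | mk (u v α : List (T ⊕ N)) (A : N) (h : P A α) :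
      CFStep P (u ++ Sum.inr A :: v) (u ++ α ++ v)

/-- Multi-step derivation. -/
def Derives {T N : Type} (P : N → List (T ⊕ N) → Prop) :
    List (T ⊕ N) → List (T ⊕ N) → Prop :=
  Relation.ReflTransGen (CFStep P)

/-- One leftmost derivation step. -/
inductive LStep {T N : Type} (P : N → List (T ⊕ N) → Prop) :
    List (T ⊕ N) → List (T ⊕ N) → Prop
  | mk (u : List T) (v α : List (T ⊕ N)) (A : N) (h : P A α) :
      LStep P (List.map Sum.inl u ++ Sum.inr A :: v) (List.map Sum.inl u ++ α ++ v)

/-- Multi-step leftmost derivation. -/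
def LDerives {T N : Type} (P : N → List (T ⊕ N) → Prop) :
    List (T ⊕ N) → List (T ⊕ N) → Prop :=
  Relation.ReflTransGen (LStep P)

section Aux
variable {T N : Type} {P : N → List (T ⊕ N) → Prop}

/-- The "nullable-prefix" edge relation on nonterminals. -/
def Edge (P : N → List (T ⊕ N) → Prop) (A B : N) : Prop :=
  ∃ (As : List N) (γ : List (T ⊕ N)),
    (∀ C ∈ As, Derives P [Sum.inr C] []) ∧
    P A (List.map Sum.inr As ++ Sum.inr B :: γ)

lemma cfstep_append (x y : List (T ⊕ N)) {a b : List (T ⊕ N)} (h : CFStep P a b) :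
    CFStep P (x ++ a ++ y) (x ++ b ++ y) := by
  obtain ⟨u, v, α, A, h⟩ := h
  have h1 : x ++ (u ++ Sum.inr A :: v) ++ y = (x ++ u) ++ Sum.inr A :: (v ++ y) := by simp
  have h2 : x ++ (u ++ α ++ v) ++ y = (x ++ u) ++ α ++ (v ++ y) := by simp
  rw [h1, h2]
  exact CFStep.mk _ _ _ _ h

lemma derives_append (x y : List (T ⊕ N)) {a b : List (T ⊕ N)} (h : Derives P a b) :
    Derives P (x ++ a ++ y) (x ++ b ++ y) := by
  induction h with
  | refl => exact Relation.ReflTransGen.refl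
  | tail _ hstep ih => exact ih.tail (cfstep_append x y hstep)

lemma derives_erase (As : List N) (hn : ∀ C ∈ As, Derives P [Sum.inr C] [])
    (w : List (T ⊕ N)) : Derives P (List.map Sum.inr As ++ w) w := by
  induction As with
  | nil => exact Relation.ReflTransGen.refl
  | cons C As ih =>
    have h1 : Derives P (Sum.inr C :: (List.map Sum.inr As ++ w))
        (List.map Sum.inr As ++ w) := by
      have := derives_append [] (List.map Sum.inr As ++ w)
        (hn C (by simp))
      simpa using this
    exact Relation.ReflTransGen.trans (by simpa [Derives] using h1) (ih fun C hC => hn C (by simp [hC]))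

lemma edge_step {A B : N} (h : Edge P A B) (δ : List (T ⊕ N)) :
    ∃ γ, Relation.TransGen (CFStep P) (Sum.inr A :: δ) (Sum.inr B :: (γ ++ δ)) := by
  obtain ⟨As, γ, hnull, hP⟩ := h
  refine ⟨γ, Relation.TransGen.head'
      (b := (List.map Sum.inr As ++ Sum.inr B :: γ) ++ δ) ?_ ?_⟩
  · have := CFStep.mk (P := P) [] δ _ A hP
    simpa using this
  · have := derives_erase As hnull (Sum.inr B :: (γ ++ δ))
    simpa [Derives] using this

lemma edge_path {A B : N} (h : Relation.TransGen (Edge P) A B) :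
    ∀ δ : List (T ⊕ N),
      ∃ γ, Relation.TransGen (CFStep P) (Sum.inr A :: δ) (Sum.inr B :: (γ ++ δ)) := by
  induction h using Relation.TransGen.head_induction_on with
  | single h => exact edge_step h
  | head h' _ ih =>
    intro δ
    obtain ⟨γ₁, h1⟩ := edge_step h' δ
    obtain ⟨γ₂, h2⟩ := ih (γ₁ ++ δ)
    exact ⟨γ₂ ++ γ₁, by simpa using h1.trans h2⟩

lemma step_singleton {A : N} {x w : List (T ⊕ N)} (h : CFStep P x w)
    (hx : x = [Sum.inr A]) : ∃ α, P A α ∧ w = α := by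
  obtain ⟨u, v, α, D, hP⟩ := h
  cases u with
  | nil =>
    simp only [List.nil_append, List.cons.injEq, Sum.inr.injEq] at hx
    obtain ⟨rfl, rfl⟩ := hx
    exact ⟨α, hP, by simp⟩
  | cons x u' => simp at hx

lemma key {B : N} {β w : List (T ⊕ N)}
    (h : Derives P w (Sum.inr B :: β)) :
    ∃ (As : List N) (C : N) (δ : List (T ⊕ N)),
      w = List.map Sum.inr As ++ Sum.inr C :: δ ∧
      (∀ X ∈ As, Derives P [Sum.inr X] []) ∧
      Relation.ReflTransGen (Edge P) C B := by
  induction h using Relation.ReflTransGen.head_induction_on with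
  | refl => exact ⟨[], B, β, rfl, by simp, Relation.ReflTransGen.refl⟩
  | head hstep _ ih =>
    obtain ⟨As', C', δ', hw', hnull', hrt⟩ := ih
    obtain ⟨u, v, α, D, hP⟩ := hstep
    -- hw' : u ++ α ++ v = map inr As' ++ inr C' :: δ'
    rw [List.append_assoc] at hw'
    rcases List.append_eq_append_iff.mp hw' with ⟨t, ht1, ht2⟩ | ⟨t, ht1, ht2⟩
    · -- map inr As' = u ++ t, α ++ v = t ++ inr C' :: δ'
      obtain ⟨As1, As2, hAs, hu, ht⟩ := List.map_eq_append_iff.mp ht1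
      subst hAs; subst hu; subst ht
      rcases List.append_eq_append_iff.mp ht2 with ⟨s, hs1, hs2⟩ | ⟨s, hs1, hs2⟩
      · -- map inr As2 = α ++ s, v = s ++ inr C' :: δ'
        obtain ⟨As2a, As2b, hAs2, hα, hs⟩ := List.map_eq_append_iff.mp hs1
        subst hAs2; subst hα; subst hs; subst hs2
        refine ⟨As1 ++ D :: As2b, C', δ', by simp, ?_, hrt⟩
        intro X hX
        simp only [List.mem_append, List.mem_cons] at hX
        rcases hX with hX | rfl | hX
        · exact hnull' _ (by simp [hX])
        · refine Relation.ReflTransGen.head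
            (by simpa using CFStep.mk (P := P) [] [] _ X hP) ?_
          have := derives_erase (P := P) As2a
            (fun C hC => hnull' C (by simp [hC])) []
          simpa [Derives] using this
        · exact hnull' _ (by simp [hX])
      · -- α = map inr As2 ++ s, inr C' :: δ' = s ++ v
        cases s with
        | nil =>
          simp only [List.append_nil] at hs1
          subst hs1
          simp only [List.nil_append] at hs2
          refine ⟨As1 ++ [D], C', δ', by simp [hs2], ?_, hrt⟩
          intro X hX
          simp only [List.mem_append, List.mem_singleton] at hX
          rcases hX with hX | rfl
          · exact hnull' _ (by simp [hX])
          · refine Relation.ReflTransGen.head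
              (by simpa using CFStep.mk (P := P) [] [] _ X hP) ?_
            have := derives_erase (P := P) As2 (fun C hC => hnull' C (by simp [hC])) []
            simpa [Derives] using this
        | cons x s' =>
          injection hs2 with hx hδ'
          subst hx
          refine ⟨As1, D, v, by simp, fun X hX => hnull' X (by simp [hX]), ?_⟩
          exact Relation.ReflTransGen.head ⟨As2, s',
            fun C hC => hnull' C (by simp [hC]), by rw [← hs1]; exact hP⟩ hrt
    · -- u = map inr As' ++ t, inr C' :: δ' = t ++ (α ++ v)
      cases t with
      | nil =>
        simp only [List.append_nil] at ht1
        subst ht1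
        simp only [List.nil_append] at ht2
        cases α with
        | nil =>
          simp only [List.nil_append] at ht2
          refine ⟨As' ++ [D], C', δ', by simp [ht2], ?_, hrt⟩
          intro X hX
          simp only [List.mem_append, List.mem_singleton] at hX
          rcases hX with hX | rfl
          · exact hnull' _ hX
          · exact Relation.ReflTransGen.single
              (by simpa using CFStep.mk (P := P) [] [] _ X hP)
        | cons a α' =>
          rw [List.cons_append] at ht2
          injection ht2 with ha hδ'
          subst ha
          refine ⟨As', D, v, rfl, hnull', ?_⟩
          exact Relation.ReflTransGen.head ⟨[], α', by simp, by simpa using hP⟩ hrt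
      | cons x t' =>
        rw [List.cons_append] at ht2
        injection ht2 with hx hδ'
        subst hx
        subst ht1
        exact ⟨As', C', t' ++ Sum.inr D :: v, by simp, hnull', hrt⟩

end Aux

/-- the grammar admits a left-recursive derivation `A ⇒+ Aβ`
iff the graph on nonterminals, with an edge `A → B` whenever there is a rule
`A → A₁…AₖBγ` with all `A₁,…,Aₖ` nullable, contains a cycle. -/
theorem left_recursion_iff_cycle {T N : Type}
    (P : N → List (T ⊕ N) → Prop) :
    (∃ (A : N) (β : List (T ⊕ N)),
        Relation.TransGen (CFStep P) [Sum.inr A] (Sum.inr A :: β)) ↔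
    (∃ A : N, Relation.TransGen
        (fun (A B : N) => ∃ (As : List N) (γ : List (T ⊕ N)),
            (∀ C ∈ As, Derives P [Sum.inr C] []) ∧
            P A (List.map Sum.inr As ++ Sum.inr B :: γ))
        A A) := by
  show _ ↔ ∃ A : N, Relation.TransGen (Edge P) A A
  constructor
  · rintro ⟨A, β, h⟩
    obtain ⟨w, h1, h2⟩ := Relation.TransGen.head'_iff.mp h
    obtain ⟨α, hP, rfl⟩ := step_singleton h1 rfl
    obtain ⟨As, C, δ, rfl, hnull, hrt⟩ := key h2
    exact ⟨A, Relation.TransGen.head' ⟨As, δ, hnull, hP⟩ hrt⟩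
  · rintro ⟨A, h⟩
    obtain ⟨γ, hp⟩ := edge_path h []
    exact ⟨A, γ, by simpa using hp⟩
end

section
/- Let G be an EBNF grammar in which each nonterminal A has exactly one rule A → α with α a regular expression over Σ ∪ V, and let Ĝ be the right-linearized BNF grammar obtained by replacing each machine M_A (a DFA recognizing R(α)) with rules p_A → X r_A for each transition p_A →X r_A (where nonterminals B occurring as labels are replaced by the initial state 0_B) and p_A → ε for final states. Then L(Ĝ) = L(G). -/
/-- A machine net: one partial DFA over `Σ ∪ V` per nonterminal. -/
structure MachineNet (T N : Type) where
  State : N → Type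
  init : ∀ A, State A
  final : ∀ A, Set (State A)
  step : ∀ A, State A → T ⊕ N → Option (State A)
  start : N

/-- The set of all states of the net. -/
abbrev MachineNet.Q {T N : Type} (net : MachineNet T N) : Type :=
  Σ A : N, net.State A

/-- Transition function on the global state set. -/
def MachineNet.stepS {T N : Type} (net : MachineNet T N) (q : net.Q)
    (X : T ⊕ N) : Option net.Q :=
  (net.step q.1 q.2 X).map (fun r => ⟨q.1, r⟩)

def MachineNet.IsFinal {T N : Type} (net : MachineNet T N) (q : net.Q) : Prop :=
  q.2 ∈ net.final q.1

/-- `Reads net A p w q`: machine `M_A` goes from `p` to `q` reading `w ∈ (Σ ∪ V)*`. -/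
inductive MachineNet.Reads {T N : Type} (net : MachineNet T N) (A : N) :
    net.State A → List (T ⊕ N) → net.State A → Prop
  | refl (q : net.State A) : MachineNet.Reads net A q [] q
  | cons {p q r : net.State A} {s : T ⊕ N} {w : List (T ⊕ N)} :
      net.step A p s = some q → MachineNet.Reads net A q w r →
      MachineNet.Reads net A p (s :: w) r

/-- One EBNF derivation step: `u A v ⇒ u w v` with `w` accepted by machine `M_A`. -/
inductive MachineNet.EStep {T N : Type} (net : MachineNet T N) :
    List (T ⊕ N) → List (T ⊕ N) → Prop
  | mk (u v w : List (T ⊕ N)) (A : N) (f : net.State A) :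
      net.Reads A (net.init A) w f → f ∈ net.final A →
      MachineNet.EStep net (u ++ Sum.inr A :: v) (u ++ w ++ v)

def MachineNet.EDerives {T N : Type} (net : MachineNet T N) :
    List (T ⊕ N) → List (T ⊕ N) → Prop :=
  Relation.ReflTransGen net.EStep

/-- The terminal language `L(M_A, q)` recognized from state `q` of machine `M_A`. -/
def MachineNet.TermLang {T N : Type} (net : MachineNet T N) (A : N)
    (q : net.State A) : Set (List T) :=
  {y | ∃ w f, net.Reads A q w f ∧ f ∈ net.final A ∧
      net.EDerives w (List.map Sum.inl y)}

def MachineNet.TermLangS {T N : Type} (net : MachineNet T N) (q : net.Q) :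
    Set (List T) :=
  net.TermLang q.1 q.2

/-- Rules of the right-linearized grammar `Ĝ` of the net. -/
def MachineNet.RLRules {T N : Type} (net : MachineNet T N) :
    net.Q → List (T ⊕ net.Q) → Prop := fun q α =>
  (∃ a r, net.stepS q (Sum.inl a) = some r ∧ α = [Sum.inl a, Sum.inr r]) ∨
  (∃ B r, net.stepS q (Sum.inr B) = some r ∧
      α = [Sum.inr ⟨B, net.init B⟩, Sum.inr r]) ∨
  (net.IsFinal q ∧ α = [])

section Generic

variable {T N : Type} {P : N → List (T ⊕ N) → Prop}

inductive DerN (P : N → List (T ⊕ N) → Prop) : ℕ → List (T ⊕ N) → List (T ⊕ N) → Prop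
  | refl (x) : DerN P 0 x x
  | head {n x y z} : CFStep P x y → DerN P n y z → DerN P (n+1) x z

lemma DerN.derives {n x y} (h : DerN P n x y) : Derives P x y := by
  induction h with
  | refl x => exact Relation.ReflTransGen.refl
  | head s _ ih => exact Relation.ReflTransGen.head s ih

lemma derives_iff_derN {x y} : Derives P x y ↔ ∃ n, DerN P n x y := by
  constructor
  · intro h
    induction h using Relation.ReflTransGen.head_induction_on with
    | refl => exact ⟨0, DerN.refl _⟩
    | head s _ ih => obtain ⟨n, hn⟩ := ih; exact ⟨n + 1, DerN.head s hn⟩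
  · rintro ⟨n, hn⟩; exact hn.derives

lemma CFStep.context {x y} (s t : List (T ⊕ N)) (h : CFStep P x y) :
    CFStep P (s ++ x ++ t) (s ++ y ++ t) := by
  obtain ⟨u, v, α, A, hr⟩ := h
  have h1 : s ++ (u ++ Sum.inr A :: v) ++ t = (s ++ u) ++ Sum.inr A :: (v ++ t) := by
    simp
  have h2 : s ++ (u ++ α ++ v) ++ t = (s ++ u) ++ α ++ (v ++ t) := by simp
  rw [h1, h2]
  exact CFStep.mk _ _ _ _ hr

lemma Derives.context {x y} (s t : List (T ⊕ N)) (h : Derives P x y) :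
    Derives P (s ++ x ++ t) (s ++ y ++ t) := by
  induction h with
  | refl => exact Relation.ReflTransGen.refl
  | tail _ st ih => exact ih.tail (st.context s t)

lemma Derives.append_congr {x x' y y'} (hx : Derives P x x') (hy : Derives P y y') :
    Derives P (x ++ y) (x' ++ y') := by
  have h1 : Derives P (x ++ y) (x' ++ y) := by
    have := hx.context [] y; simpa using this
  have h2 : Derives P (x' ++ y) (x' ++ y') := by
    have := hy.context x' ([] : List (T ⊕ N)); simpa using this
  exact h1.trans h2

lemma singleton_eq_append_cons {α : Type*} {u v : List α} {a b : α}
    (h : u ++ a :: v = [b]) : u = [] ∧ a = b ∧ v = [] := by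
  cases u with
  | nil => simpa using h
  | cons c u' =>
    have := congrArg List.length h
    simp [Nat.succ_add] at this

lemma CFStep.inv {x y} (h : CFStep P x y) :
    ∃ u v α A, P A α ∧ x = u ++ Sum.inr A :: v ∧ y = u ++ α ++ v := by
  cases h with
  | mk u v α A hr => exact ⟨u, v, α, A, hr, rfl, rfl⟩

lemma no_step_terminal {u : List T} {z} (h : CFStep P (List.map Sum.inl u) z) : False := by
  obtain ⟨s, t, α, A, -, hx, -⟩ := h.inv
  have : Sum.inr A ∈ List.map (Sum.inl : T → T ⊕ N) u := by rw [hx]; simp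
  simp at this

lemma derN_terminal {n} {u : List T} {z} (h : DerN P n (List.map Sum.inl u) z) :
    n = 0 ∧ z = List.map Sum.inl u := by
  cases h with
  | refl => exact ⟨rfl, rfl⟩
  | head s _ => exact absurd s (by intro hs; exact no_step_terminal hs)

end Generic

section Split

variable {T N : Type} {P : N → List (T ⊕ N) → Prop}

/-- An occurrence of `Sum.inr A` in a concatenation lies in one of the parts. -/
lemma cons_mid_of_append {γ1 γ2 u v : List (T ⊕ N)} {A : N}
    (h : u ++ Sum.inr A :: v = γ1 ++ γ2) :
    (∃ v1, γ1 = u ++ Sum.inr A :: v1 ∧ v = v1 ++ γ2) ∨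
    (∃ u2, γ2 = u2 ++ Sum.inr A :: v ∧ u = γ1 ++ u2) := by
  rcases List.append_eq_append_iff.mp h with ⟨a', h1, h2⟩ | ⟨c', h1, h2⟩
  · cases a' with
    | nil => right; exact ⟨[], by simpa using h2.symm, by simpa using h1.symm⟩
    | cons s a'' =>
      left
      obtain ⟨hs, hv⟩ : s = Sum.inr A ∧ Sum.inr A :: v = Sum.inr A :: (a'' ++ γ2) := by
        have := h2
        simp at this
        exact ⟨this.1.symm, by rw [List.cons_inj_right]; exact this.2⟩
      refine ⟨a'', by rw [h1, hs], by simpa using hv⟩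
  · right; exact ⟨c', h2, h1⟩

lemma DerN.split {n x z} (h : DerN P n x z) :
    ∀ γ1 γ2, x = γ1 ++ γ2 →
      ∃ n1 n2 z1 z2, n = n1 + n2 ∧ z = z1 ++ z2 ∧ DerN P n1 γ1 z1 ∧ DerN P n2 γ2 z2 := by
  induction h with
  | refl x =>
    rintro γ1 γ2 rfl
    exact ⟨0, 0, γ1, γ2, rfl, rfl, DerN.refl _, DerN.refl _⟩
  | @head n x y z st _ ih =>
    rintro γ1 γ2 rfl
    obtain ⟨u, v, α, A, hr, hx, hy⟩ := st.inv
    rcases cons_mid_of_append hx.symm with ⟨v1, hg1, hv⟩ | ⟨u2, hg2, hu⟩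
    · have hy' : y = (u ++ α ++ v1) ++ γ2 := by rw [hy, hv]; simp
      obtain ⟨n1, n2, z1, z2, hn, hz, d1, d2⟩ := ih _ _ hy'
      refine ⟨n1 + 1, n2, z1, z2, by omega, hz, ?_, d2⟩
      refine DerN.head ?_ d1
      rw [hg1]
      exact CFStep.mk u v1 α A hr
    · have hy' : y = γ1 ++ (u2 ++ α ++ v) := by rw [hy, hu]; simp
      obtain ⟨n1, n2, z1, z2, hn, hz, d1, d2⟩ := ih _ _ hy'
      refine ⟨n1, n2 + 1, z1, z2, by omega, hz, d1, ?_⟩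
      refine DerN.head ?_ d2
      rw [hg2]
      exact CFStep.mk u2 v α A hr

/-- Splitting of a terminal word. -/
lemma map_inl_eq_append {x : List T} {z1 z2 : List (T ⊕ N)}
    (h : List.map Sum.inl x = z1 ++ z2) :
    ∃ x1 x2, x = x1 ++ x2 ∧ z1 = List.map Sum.inl x1 ∧ z2 = List.map Sum.inl x2 := by
  rcases List.map_eq_append_iff.mp h with ⟨x1, x2, hx, h1, h2⟩
  exact ⟨x1, x2, hx, h1.symm, h2.symm⟩

lemma DerN.inv' {T' N' : Type} {P : N' → List (T' ⊕ N') → Prop} {n x z}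
    (h : DerN P n x z) :
    (n = 0 ∧ z = x) ∨ ∃ m y, n = m + 1 ∧ CFStep P x y ∧ DerN P m y z := by
  cases h with
  | refl => exact Or.inl ⟨rfl, rfl⟩
  | head s hd => exact Or.inr ⟨_, _, rfl, s, hd⟩

lemma cfstep_singleton {T' N' : Type} {P : N' → List (T' ⊕ N') → Prop} {q : N'}
    {y : List (T' ⊕ N')} (h : CFStep P [Sum.inr q] y) : ∃ α, P q α ∧ y = α := by
  obtain ⟨u, v, α, A, hr, hx, hy⟩ := h.inv
  obtain ⟨hu, hA, hv⟩ := singleton_eq_append_cons hx.symm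
  obtain rfl : A = q := by simpa using hA
  exact ⟨α, hr, by rw [hy, hu, hv]; simp⟩

end Split

namespace MachineNet

variable {T N : Type} (net : MachineNet T N)

/-- The rule predicate corresponding to EBNF steps. -/
def ERules : N → List (T ⊕ N) → Prop := fun A w =>
  ∃ f, net.Reads A (net.init A) w f ∧ f ∈ net.final A

lemma estep_iff_cfstep {x y : List (T ⊕ N)} :
    net.EStep x y ↔ CFStep net.ERules x y := by
  constructor
  · rintro ⟨u, v, w, A, f, hr, hf⟩
    exact CFStep.mk u v w A ⟨f, hr, hf⟩
  · intro h
    obtain ⟨u, v, α, A, ⟨f, hr, hf⟩, hx, hy⟩ := h.inv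
    rw [hx, hy]
    exact EStep.mk u v α A f hr hf

lemma ederives_iff_derives {x y : List (T ⊕ N)} :
    net.EDerives x y ↔ Derives net.ERules x y := by
  constructor
  · intro h
    exact Relation.ReflTransGen.mono (fun a b hab => (net.estep_iff_cfstep).mp hab) _ _ h
  · intro h
    exact Relation.ReflTransGen.mono (fun a b hab => (net.estep_iff_cfstep).mpr hab) _ _ h

lemma map_inl_ne_inr_singleton {x : List T} {B : N} :
    List.map Sum.inl x ≠ ([Sum.inr B] : List (T ⊕ N)) := by
  cases x with
  | nil => simp
  | cons a x' => simp

/-- Ĝ → G : a terminal word derivable in the right-linearized grammar from a state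
`q` is in the terminal language of `q`. -/
lemma rl_to_termlang : ∀ n (q : net.Q) (x : List T),
    DerN net.RLRules n [Sum.inr q] (List.map Sum.inl x) → x ∈ net.TermLangS q := by
  intro n
  induction n using Nat.strong_induction_on with
  | _ n ih =>
    intro q x h
    rcases h.inv' with ⟨-, hz⟩ | ⟨m, y, rfl, st, hd⟩
    · exact absurd hz map_inl_ne_inr_singleton
    · obtain ⟨α, hrule, rfl⟩ := cfstep_singleton st
      obtain ⟨A, p⟩ := q
      rcases hrule with ⟨a, r, hstep, rfl⟩ | ⟨B, r, hstep, rfl⟩ | ⟨hfin, rfl⟩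
      · -- terminal transition p →a r'
        rw [MachineNet.stepS] at hstep
        rcases Option.map_eq_some_iff.mp hstep with ⟨r', hst, rfl⟩
        obtain ⟨n1, n2, z1, z2, hn, hz, d1, d2⟩ :=
          hd.split [Sum.inl a] [Sum.inr ⟨A, r'⟩] rfl
        obtain ⟨-, rfl⟩ := derN_terminal (u := [a]) (by simpa using d1)
        obtain ⟨x1, x2, rfl, hz1, hz2⟩ := map_inl_eq_append hz
        obtain rfl : x1 = [a] := by
          cases x1 with
          | nil => simp at hz1
          | cons b x1' => cases x1' <;> simp_all
        rw [hz2] at d2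
        obtain ⟨w, f, hrd, hf, hed⟩ := ih n2 (by omega) ⟨A, r'⟩ x2 d2
        refine ⟨Sum.inl a :: w, f, Reads.cons hst hrd, hf, ?_⟩
        have := ((net.ederives_iff_derives).mpr
          (((net.ederives_iff_derives).mp hed).context [Sum.inl a] []))
        simpa using this
      · -- nonterminal transition p →B r'
        rw [MachineNet.stepS] at hstep
        rcases Option.map_eq_some_iff.mp hstep with ⟨r', hst, rfl⟩
        obtain ⟨n1, n2, z1, z2, hn, hz, d1, d2⟩ :=
          hd.split [Sum.inr ⟨B, net.init B⟩] [Sum.inr ⟨A, r'⟩] rfl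
        obtain ⟨x1, x2, rfl, hz1, hz2⟩ := map_inl_eq_append hz
        rw [hz1] at d1
        rw [hz2] at d2
        obtain ⟨w1, f1, hr1, hf1, he1⟩ := ih n1 (by omega) ⟨B, net.init B⟩ x1 d1
        obtain ⟨w2, f2, hr2, hf2, he2⟩ := ih n2 (by omega) ⟨A, r'⟩ x2 d2
        refine ⟨Sum.inr B :: w2, f2, Reads.cons hst hr2, hf2, ?_⟩
        have hB : net.EDerives [Sum.inr B] (List.map Sum.inl x1) := by
          refine Relation.ReflTransGen.head ?_ he1
          have := EStep.mk (net := net) [] [] w1 B f1 hr1 hf1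
          simpa using this
        have : net.EDerives ([Sum.inr B] ++ w2)
            (List.map Sum.inl x1 ++ List.map Sum.inl x2) :=
          (net.ederives_iff_derives).mpr
            (Derives.append_congr ((net.ederives_iff_derives).mp hB)
              ((net.ederives_iff_derives).mp he2))
        simpa using this
      · -- final state
        obtain ⟨-, hz⟩ := derN_terminal (u := []) (by simpa using hd)
        obtain rfl : x = [] := by cases x <;> simp_all
        exact ⟨[], p, Reads.refl p, hfin, Relation.ReflTransGen.refl⟩

/-- G → Ĝ : words in the terminal language of a state are derivable in `Ĝ`. -/
lemma termlang_to_rl : ∀ n (w : List (T ⊕ N)) (A : N) (q f : net.State A) (x : List T),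
    net.Reads A q w f → f ∈ net.final A →
    (∃ m ≤ n, DerN net.ERules m w (List.map Sum.inl x)) →
    Derives net.RLRules [Sum.inr ⟨A, q⟩] (List.map Sum.inl x) := by
  intro n
  induction n using Nat.strong_induction_on with
  | _ n ih =>
    intro w A q f x hr hf
    induction hr generalizing x with
    | refl p =>
      rintro ⟨m, -, hd⟩
      obtain ⟨-, hz⟩ := derN_terminal (u := ([] : List T)) (by simpa using hd)
      obtain rfl : x = [] := by cases x <;> simp_all
      refine Relation.ReflTransGen.single ?_
      have := CFStep.mk (P := net.RLRules) [] [] [] ⟨A, p⟩ (Or.inr (Or.inr ⟨hf, rfl⟩))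
      simpa using this
    | @cons p q r s w' hst hrd ihr =>
      rintro ⟨m, hm, hd⟩
      obtain ⟨m1, m2, z1, z2, hn, hz, d1, d2⟩ := hd.split [s] w' rfl
      obtain ⟨x1, x2, rfl, hz1, hz2⟩ := map_inl_eq_append hz
      rw [hz2] at d2
      have hder2 : Derives net.RLRules [Sum.inr ⟨A, q⟩] (List.map Sum.inl x2) :=
        ihr x2 hf ⟨m2, by omega, d2⟩
      cases s with
      | inl a =>
        obtain ⟨-, h1⟩ := derN_terminal (u := [a]) (by simpa using d1)
        obtain rfl : x1 = [a] := by
          cases x1 with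
          | nil => simp [h1] at hz1
          | cons b x1' => cases x1' <;> simp_all
        have hstep : CFStep net.RLRules [Sum.inr ⟨A, p⟩]
            [Sum.inl a, Sum.inr ⟨A, q⟩] := by
          have := CFStep.mk (P := net.RLRules) [] [] [Sum.inl a, Sum.inr ⟨A, q⟩] ⟨A, p⟩
            (Or.inl ⟨a, ⟨A, q⟩, by simp [MachineNet.stepS, hst], rfl⟩)
          simpa using this
        refine Relation.ReflTransGen.head hstep ?_
        have := hder2.context [Sum.inl a] []
        simpa [Derives] using this
      | inr B =>
        rcases d1.inv' with ⟨-, hz1'⟩ | ⟨k, y, hk, st1, dk⟩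
        · rw [hz1'] at hz1; exact absurd hz1.symm map_inl_ne_inr_singleton
        · obtain ⟨α, ⟨f1, hr1, hf1⟩, rfl⟩ := cfstep_singleton st1
          rw [hz1] at dk
          have hB : Derives net.RLRules [Sum.inr ⟨B, net.init B⟩]
              (List.map Sum.inl x1) :=
            ih k (by omega) y B (net.init B) f1 x1 hr1 hf1 ⟨k, le_refl k, dk⟩
          have hstep : CFStep net.RLRules [Sum.inr ⟨A, p⟩]
              [Sum.inr ⟨B, net.init B⟩, Sum.inr ⟨A, q⟩] := by
            have := CFStep.mk (P := net.RLRules) [] []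
              [Sum.inr ⟨B, net.init B⟩, Sum.inr ⟨A, q⟩] ⟨A, p⟩
              (Or.inr (Or.inl ⟨B, ⟨A, q⟩, by simp [MachineNet.stepS, hst], rfl⟩))
            simpa using this
          refine Relation.ReflTransGen.head hstep ?_
          have := Derives.append_congr hB hder2
          simpa [Derives] using this

end MachineNet

/-- the right-linearized grammar `Ĝ` of a machine net generates
the same terminal language as the EBNF grammar `G` represented by the net. -/
theorem right_linearized_equivalent {T N : Type} (net : MachineNet T N) :
    {x : List T | Derives net.RLRules
        [Sum.inr ⟨net.start, net.init net.start⟩] (x.map Sum.inl)} =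
    {x : List T | net.EDerives [Sum.inr net.start] (x.map Sum.inl)} := by
  ext x
  simp only [Set.mem_setOf_eq]
  constructor
  · intro h
    obtain ⟨n, hn⟩ := derives_iff_derN.mp h
    obtain ⟨w, f, hr, hf, he⟩ := net.rl_to_termlang n ⟨net.start, net.init net.start⟩ x hn
    refine Relation.ReflTransGen.head ?_ he
    have := MachineNet.EStep.mk (net := net) [] [] w net.start f hr hf
    simpa using this
  · intro h
    obtain ⟨n, hn⟩ := derives_iff_derN.mp ((net.ederives_iff_derives).mp h)
    rcases hn.inv' with ⟨-, hz⟩ | ⟨m, y, rfl, st, hd⟩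
    · exact absurd hz MachineNet.map_inl_ne_inr_singleton
    · obtain ⟨α, ⟨f, hr, hf⟩, rfl⟩ := cfstep_singleton st
      exact net.termlang_to_rl m y net.start (net.init net.start) f x hr hf
        ⟨m, le_refl m, hd⟩
end

section
/- (Earley correctness) Let E[0..n] be the Earley vector computed by the Earley algorithm on input x = x₁…xₙ for a machine net with right-linearized grammar Ĝ. If ⟨q_A, j⟩ ∈ E[i] with q_A a state of machine M_A, then j ≤ i, ⟨0_A, j⟩ ∈ E[j], and Ĝ admits a leftmost derivation 0_A ⇒* x_{j+1}…x_i q_A (which is 0_A ⇒* q_A when j = i). -/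
/-- The Earley relation: `Earley net x i q j` means `⟨q, j⟩ ∈ E[i]`. -/
inductive MachineNet.Earley {T N : Type} (net : MachineNet T N) (x : List T) :
    ℕ → net.Q → ℕ → Prop
  | init : MachineNet.Earley net x 0 ⟨net.start, net.init net.start⟩ 0
  | closure {i j : ℕ} {p r : net.Q} {B : N} :
      MachineNet.Earley net x i p j → net.stepS p (Sum.inr B) = some r →
      MachineNet.Earley net x i ⟨B, net.init B⟩ i
  | termShift {i j : ℕ} {p q : net.Q} {a : T} :
      MachineNet.Earley net x i p j → x[i]? = some a →
      net.stepS p (Sum.inl a) = some q →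
      MachineNet.Earley net x (i + 1) q j
  | nontermShift {i j l : ℕ} {f p q : net.Q} :
      MachineNet.Earley net x i f j → net.IsFinal f →
      MachineNet.Earley net x j p l →
      net.stepS p (Sum.inr f.1) = some q →
      MachineNet.Earley net x i q l

lemma lstep_lift {T N : Type} {P : N → List (T ⊕ N) → Prop} (u : List T)
    (γ : List (T ⊕ N)) {α β : List (T ⊕ N)} (h : LStep P α β) :
    LStep P (List.map Sum.inl u ++ α ++ γ) (List.map Sum.inl u ++ β ++ γ) := by
  cases h with
  | mk u' v α A hr =>
    have := LStep.mk (P := P) (u ++ u') (v ++ γ) α A hr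
    simpa [List.append_assoc] using this

lemma lderives_lift {T N : Type} {P : N → List (T ⊕ N) → Prop} (u : List T)
    (γ : List (T ⊕ N)) {α β : List (T ⊕ N)} (h : LDerives P α β) :
    LDerives P (List.map Sum.inl u ++ α ++ γ) (List.map Sum.inl u ++ β ++ γ) :=
  Relation.ReflTransGen.lift (fun s => List.map Sum.inl u ++ s ++ γ)
    (fun _ _ hs => lstep_lift u γ hs) _ _ h

lemma dt1 {T : Type} (x : List T) {i j : ℕ} {a : T} (hj : j ≤ i)
    (ha : x[i]? = some a) :
    (x.take (i + 1)).drop j = (x.take i).drop j ++ [a] := by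
  have hi : i < x.length := by
    by_contra hc
    rw [List.getElem?_eq_none (by omega)] at ha
    cases ha
  rw [List.take_succ, ha]
  rw [List.drop_append_of_le_length (by simp; omega)]
  rfl

lemma dt2 {T : Type} (y : List T) {l j : ℕ} (hl : l ≤ j) :
    (y.take j).drop l ++ y.drop j = y.drop l := by
  conv_rhs => rw [← List.take_append_drop j y]
  rw [List.drop_append]
  congr 1
  rcases le_or_gt l (y.take j).length with h | h
  · have : l - (y.take j).length = 0 := by omega
    rw [this, List.drop_zero]
  · have hy : y.length < l := by simp at h; omega
    rw [List.drop_drop]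
    rw [List.drop_eq_nil_of_le (by omega), List.drop_eq_nil_of_le (by omega)]

lemma earley_aux {T N : Type} (net : MachineNet T N) (x : List T)
    {i j : ℕ} {q : net.Q} (h : net.Earley x i q j) :
    j ≤ i ∧ net.Earley x j ⟨q.1, net.init q.1⟩ j ∧
    LDerives net.RLRules [Sum.inr (⟨q.1, net.init q.1⟩ : net.Q)]
      (((x.take i).drop j).map Sum.inl ++ [Sum.inr q]) := by
  induction h with
  | init =>
    refine ⟨le_refl 0, MachineNet.Earley.init, ?_⟩
    simp only [List.take_zero, List.drop_nil, List.map_nil, List.nil_append]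
    exact Relation.ReflTransGen.refl
  | closure hp hstep ih =>
    rename_i i j p r B
    refine ⟨le_refl i, MachineNet.Earley.closure hp hstep, ?_⟩
    rw [List.drop_take]
    simp only [Nat.sub_self, List.take_zero, List.map_nil, List.nil_append]
    exact Relation.ReflTransGen.refl
  | termShift hp ha hstep ih =>
    rename_i i j p q' a
    obtain ⟨hji, hinit, hder⟩ := ih
    have hq1 : q'.1 = p.1 := by
      unfold MachineNet.stepS at hstep
      cases hpq : net.step p.1 p.2 (Sum.inl a) with
      | none => rw [hpq] at hstep; cases hstep
      | some r => rw [hpq] at hstep; cases hstep; rfl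
    refine ⟨by omega, hq1 ▸ hinit, ?_⟩
    have hrule : net.RLRules p [Sum.inl a, Sum.inr q'] :=
      Or.inl ⟨a, q', hstep, rfl⟩
    have hstep2 : LStep net.RLRules
        (((x.take i).drop j).map Sum.inl ++ [Sum.inr p])
        (((x.take i).drop j).map Sum.inl ++ [Sum.inl a, Sum.inr q'] ++ []) := by
      have := LStep.mk (P := net.RLRules) ((x.take i).drop j) []
        [Sum.inl a, Sum.inr q'] p hrule
      simpa using this
    have hder2 : LDerives net.RLRules [Sum.inr (⟨q'.1, net.init q'.1⟩ : net.Q)]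
        (((x.take i).drop j).map Sum.inl ++ [Sum.inl a, Sum.inr q'] ++ []) := by
      rw [hq1]
      exact Relation.ReflTransGen.tail hder hstep2
    have heq : ((x.take (i + 1)).drop j).map Sum.inl ++ [Sum.inr q'] =
        ((x.take i).drop j).map Sum.inl ++ [Sum.inl a, Sum.inr q'] ++ [] := by
      rw [dt1 x hji ha]
      simp
    rw [heq]
    exact hder2
  | nontermShift hf hfin hp hstep ihf ihp =>
    rename_i i j l f p q'
    obtain ⟨hji, hfinit, hfder⟩ := ihf
    obtain ⟨hlj, hpinit, hpder⟩ := ihp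
    have hq1 : q'.1 = p.1 := by
      unfold MachineNet.stepS at hstep
      cases hpq : net.step p.1 p.2 (Sum.inr f.1) with
      | none => rw [hpq] at hstep; cases hstep
      | some r => rw [hpq] at hstep; cases hstep; rfl
    refine ⟨by omega, hq1 ▸ hpinit, ?_⟩
    set w2 := (x.take j).drop l with hw2
    set w1 := (x.take i).drop j with hw1
    have hrule : net.RLRules p [Sum.inr ⟨f.1, net.init f.1⟩, Sum.inr q'] :=
      Or.inr (Or.inl ⟨f.1, q', hstep, rfl⟩)
    -- step 1: from [init p] derive w2 ++ [p]
    have d1 : LDerives net.RLRules [Sum.inr (⟨p.1, net.init p.1⟩ : net.Q)]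
        (w2.map Sum.inl ++ [Sum.inr p]) := hpder
    -- step 2: p → [inr ⟨f.1, init⟩, inr q']
    have s2 : LStep net.RLRules (w2.map Sum.inl ++ [Sum.inr p])
        (w2.map Sum.inl ++ ([Sum.inr (⟨f.1, net.init f.1⟩ : net.Q)] ++ [Sum.inr q'])) := by
      have := LStep.mk (P := net.RLRules) w2 []
        [Sum.inr (⟨f.1, net.init f.1⟩ : net.Q), Sum.inr q'] p hrule
      simpa using this
    -- step 3: expand [init f] to w1 ++ [f], inside context
    have d3 : LDerives net.RLRules
        (w2.map Sum.inl ++ ([Sum.inr (⟨f.1, net.init f.1⟩ : net.Q)] ++ [Sum.inr q']))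
        (w2.map Sum.inl ++ ((w1.map Sum.inl ++ [Sum.inr f]) ++ [Sum.inr q'])) := by
      have := lderives_lift (P := net.RLRules) w2 [Sum.inr q'] hfder
      simpa [List.append_assoc] using this
    -- step 4: f → []
    have hrulef : net.RLRules f [] := Or.inr (Or.inr ⟨hfin, rfl⟩)
    have s4 : LStep net.RLRules
        (w2.map Sum.inl ++ ((w1.map Sum.inl ++ [Sum.inr f]) ++ [Sum.inr q']))
        ((w2 ++ w1).map Sum.inl ++ [Sum.inr q']) := by
      have := LStep.mk (P := net.RLRules) (w2 ++ w1) [Sum.inr q'] [] f hrulef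
      simpa [List.append_assoc] using this
    have dall : LDerives net.RLRules [Sum.inr (⟨p.1, net.init p.1⟩ : net.Q)]
        ((w2 ++ w1).map Sum.inl ++ [Sum.inr q']) :=
      Relation.ReflTransGen.tail (Relation.ReflTransGen.trans
        (Relation.ReflTransGen.tail d1 s2) d3) s4
    have hw : w2 ++ w1 = (x.take i).drop l := by
      rw [hw1, hw2]
      have : x.take j = (x.take i).take j := by
        rw [List.take_take, min_eq_left hji]
      rw [this]
      exact dt2 (x.take i) hlj
    rw [hq1]
    rw [← hw]
    exact dall

/-- Earley correctness: if `⟨q_A, j⟩ ∈ E[i]` then `j ≤ i`,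
`⟨0_A, j⟩ ∈ E[j]`, and `Ĝ` admits a leftmost derivation
`0_A ⇒* x_{j+1}…x_i q_A`. -/
theorem earley_correctness {T N : Type} (net : MachineNet T N) (x : List T)
    {i j : ℕ} {A : N} {q : net.State A}
    (h : net.Earley x i ⟨A, q⟩ j) :
    j ≤ i ∧ net.Earley x j ⟨A, net.init A⟩ j ∧
    LDerives net.RLRules [Sum.inr (⟨A, net.init A⟩ : net.Q)]
      (((x.take i).drop j).map Sum.inl ++ [Sum.inr (⟨A, q⟩ : net.Q)]) := by
  exact earley_aux net x h
end

section
/- (Earley acceptance soundness) If the Earley vector for input x of length n contains a pair ⟨f, 0⟩ ∈ E[n] with f a final state of the axiom machine M_S, then x ∈ L(G). -/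
namespace EarleySound

variable {T N : Type} (net : MachineNet T N)

lemma reads_snoc {A : N} {p q r : net.State A} {w : List (T ⊕ N)} {s : T ⊕ N}
    (h : net.Reads A p w q) (hs : net.step A q s = some r) :
    net.Reads A p (w ++ [s]) r := by
  induction h with
  | refl q => exact .cons hs (.refl _)
  | cons h1 _ ih => exact .cons h1 (ih hs)

lemma estep_append_right {a b z : List (T ⊕ N)} (h : net.EStep a b) :
    net.EStep (a ++ z) (b ++ z) := by
  cases h with
  | mk u v w A f hr hf =>
    have := MachineNet.EStep.mk (net := net) u (v ++ z) w A f hr hf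
    simpa [List.append_assoc] using this

lemma estep_append_left {a b z : List (T ⊕ N)} (h : net.EStep a b) :
    net.EStep (z ++ a) (z ++ b) := by
  cases h with
  | mk u v w A f hr hf =>
    have := MachineNet.EStep.mk (net := net) (z ++ u) v w A f hr hf
    simpa [List.append_assoc] using this

lemma ederives_append_right {a b z : List (T ⊕ N)} (h : net.EDerives a b) :
    net.EDerives (a ++ z) (b ++ z) :=
  Relation.ReflTransGen.lift (· ++ z) (fun _ _ h => estep_append_right net h) _ _ h

lemma ederives_append_left {a b z : List (T ⊕ N)} (h : net.EDerives a b) :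
    net.EDerives (z ++ a) (z ++ b) :=
  Relation.ReflTransGen.lift (z ++ ·) (fun _ _ h => estep_append_left net h) _ _ h

lemma ederives_append {a b a' b' : List (T ⊕ N)} (h : net.EDerives a a')
    (h' : net.EDerives b b') : net.EDerives (a ++ b) (a' ++ b') :=
  Relation.ReflTransGen.trans (ederives_append_right net h)
    (ederives_append_left net h')

lemma stepS_eq {q r : net.Q} {X : T ⊕ N} (h : net.stepS q X = some r) :
    ∃ s : net.State q.1, net.step q.1 q.2 X = some s ∧ r = ⟨q.1, s⟩ := by
  unfold MachineNet.stepS at h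
  rcases Option.map_eq_some_iff.mp h with ⟨s, hs, hr⟩
  exact ⟨s, hs, hr.symm⟩

lemma drop_take_append {α : Type _} (l : List α) {k j : ℕ} (h : k ≤ j) :
    (l.take j).drop k ++ l.drop j = l.drop k := by
  rw [List.drop_take]
  have h2 : l.drop j = (l.drop k).drop (j - k) := by
    rw [List.drop_drop]
    congr 1
    omega
  rw [h2, List.take_append_drop]

lemma earley_inv {x : List T} {i j : ℕ} {q : net.Q}
    (h : net.Earley x i q j) :
    j ≤ i ∧ ∃ w, net.Reads q.1 (net.init q.1) w q.2 ∧
      net.EDerives w (((x.take i).drop j).map Sum.inl) := by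
  induction h with
  | init =>
    refine ⟨le_refl 0, [], .refl _, ?_⟩
    simp only [List.take_zero, List.drop_nil, List.map_nil]
    exact Relation.ReflTransGen.refl
  | @closure i j p r B hp hstep ih =>
    refine ⟨le_refl _, [], .refl _, ?_⟩
    have : (x.take i).drop i = ([] : List T) :=
      List.drop_eq_nil_of_le (by simp [List.length_take])
    rw [this]
    exact Relation.ReflTransGen.refl
  | @termShift i j p q a hp hx hstep ih =>
    obtain ⟨hji, w, hr, hd⟩ := ih
    obtain ⟨s, hs, hq⟩ := stepS_eq net hstep
    subst hq
    have hi : i < x.length := by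
      by_contra hc
      rw [List.getElem?_eq_none (by omega)] at hx
      simp at hx
    refine ⟨by omega, w ++ [Sum.inl a], reads_snoc net hr hs, ?_⟩
    have h1 : x.take (i + 1) = x.take i ++ [a] := by
      rw [List.take_succ, hx]; rfl
    have h2 : (x.take (i + 1)).drop j = (x.take i).drop j ++ [a] := by
      rw [h1, List.drop_append_of_le_length (by simp [List.length_take]; omega)]
    rw [h2, List.map_append]
    exact ederives_append_right net hd
  | @nontermShift i j l f p q hfE hfin hpE hstep ihf ihp =>
    obtain ⟨hji, wf, hrf, hdf⟩ := ihf
    obtain ⟨hlj, wp, hrp, hdp⟩ := ihp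
    obtain ⟨s, hs, hq⟩ := stepS_eq net hstep
    subst hq
    refine ⟨by omega, wp ++ [Sum.inr f.1], reads_snoc net hrp hs, ?_⟩
    have step1 : net.EStep (wp ++ [Sum.inr f.1]) (wp ++ wf) := by
      have := MachineNet.EStep.mk (net := net) wp [] wf f.1 f.2 hrf hfin
      simpa using this
    have step2 : net.EDerives (wp ++ wf)
        ((((x.take j).drop l).map Sum.inl) ++ (((x.take i).drop j).map Sum.inl)) :=
      ederives_append net hdp hdf
    have hsl : (((x.take j).drop l) ++ ((x.take i).drop j)) = (x.take i).drop l := by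
      have : x.take j = (x.take i).take j := by
        rw [List.take_take, min_eq_left hji]
      rw [this, drop_take_append _ hlj]
    refine Relation.ReflTransGen.head step1 ?_
    rw [← List.map_append, hsl] at step2
    exact step2

end EarleySound

/-- Earley acceptance soundness: if `⟨f, 0⟩ ∈ E[n]` with `f`
final in the axiom machine, then `x ∈ L(G)`, i.e. `S ⇒+ x`. -/
theorem earley_soundness {T N : Type} (net : MachineNet T N) (x : List T)
    (f : net.State net.start) (hf : f ∈ net.final net.start)
    (h : net.Earley x x.length ⟨net.start, f⟩ 0) :
    Relation.TransGen net.EStep [Sum.inr net.start] (x.map Sum.inl) := by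
  obtain ⟨-, w, hr, hd⟩ := EarleySound.earley_inv net h
  have hstep : net.EStep [Sum.inr net.start] w := by
    have := MachineNet.EStep.mk (net := net) [] [] w net.start f hr hf
    simpa using this
  refine Relation.TransGen.head' hstep ?_
  simpa [MachineNet.EDerives] using hd
end
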